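/- The parabolic branch of eigenvalues satisfies: (a) for every nonzero integer n with μ₀²n² ≥ 4bρ̄, μ₀·|Im(ν_n^p)| ≤ 2ū·(−Re(ν_n^p)); (b) for all distinct nonzero integers n ≠ l with μ₀²n² ≥ 4bρ̄ and μ₀²l² ≥ 4bρ̄, |ν_n^p − ν_l^p| ≥ (μ₀/2)·|n² − l²|; (c) for every nonzero integer n with μ₀²n² ≥ 4bρ̄, (μ₀/2)·n² ≤ |ν_n^p| ≤ (μ₀ + ū)·n². -/

import Mathlib

open scoped Classical
open Complex

/-- The parabolic branch of eigenvalues of the adjoint operator of the linearized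
barotropic compressible Navier–Stokes system. -/
noncomputable def nuP (ρ u b μ : ℝ) (n : ℤ) : ℂ :=
  if 4 * b * ρ ≤ μ ^ 2 * (n : ℝ) ^ 2 then
    (((-(μ * (n : ℝ) ^ 2) - |(n : ℝ)| * Real.sqrt (μ ^ 2 * (n : ℝ) ^ 2 - 4 * b * ρ)) / 2 : ℝ) : ℂ)
      + Complex.I * ((u * (n : ℝ) : ℝ) : ℂ)
  else
    ((-(μ * (n : ℝ) ^ 2) / 2 : ℝ) : ℂ)
      + Complex.I * ((u * (n : ℝ) - (n : ℝ) / 2 * Real.sqrt (4 * b * ρ - μ ^ 2 * (n : ℝ) ^ 2) : ℝ) : ℂ)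

lemma nuP_re (ρ u b μ : ℝ) (n : ℤ) (h : 4 * b * ρ ≤ μ ^ 2 * (n : ℝ) ^ 2) :
    (nuP ρ u b μ n).re
      = (-(μ * (n : ℝ) ^ 2) - |(n : ℝ)| * Real.sqrt (μ ^ 2 * (n : ℝ) ^ 2 - 4 * b * ρ)) / 2 := by
  unfold nuP; rw [if_pos h]
  simp only [Complex.add_re, Complex.ofReal_re, Complex.mul_re, Complex.I_re,
    Complex.I_im, Complex.ofReal_im]
  ring

lemma nuP_im (ρ u b μ : ℝ) (n : ℤ) (h : 4 * b * ρ ≤ μ ^ 2 * (n : ℝ) ^ 2) :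
    (nuP ρ u b μ n).im = u * (n : ℝ) := by
  unfold nuP; rw [if_pos h]
  simp only [Complex.add_im, Complex.ofReal_im, Complex.mul_im, Complex.I_re,
    Complex.I_im, Complex.ofReal_re]
  ring

lemma one_le_abs_cast (n : ℤ) (hn : n ≠ 0) : (1 : ℝ) ≤ |(n : ℝ)| := by
  rw [← Int.cast_abs]
  exact_mod_cast Int.one_le_abs hn

lemma sq_abs_le (n : ℤ) (hn : n ≠ 0) : |(n : ℝ)| ≤ (n : ℝ) ^ 2 := by
  have h1 := one_le_abs_cast n hn
  nlinarith [_root_.sq_abs (n : ℝ), abs_nonneg (n : ℝ)]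

/-- Properties of the parabolic branch for `μ₀²n² ≥ 4bρ̄`:
(a) `μ₀|Im(ν_n^p)| ≤ 2ū(−Re(ν_n^p))`;
(b) `|ν_n^p − ν_l^p| ≥ (μ₀/2)|n² − l²|` for distinct such `n, l`;
(c) `(μ₀/2)n² ≤ |ν_n^p| ≤ (μ₀ + ū)n²`. -/
theorem parabolic_branch_properties (ρ u b μ : ℝ) (hρ : 0 < ρ) (hu : 0 < u) (hb : 0 < b)
    (hμ : 0 < μ) :
    (∀ n : ℤ, n ≠ 0 → 4 * b * ρ ≤ μ ^ 2 * (n : ℝ) ^ 2 →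
      μ * |(nuP ρ u b μ n).im| ≤ 2 * u * (-(nuP ρ u b μ n).re)) ∧
    (∀ n l : ℤ, n ≠ 0 → l ≠ 0 → n ≠ l → 4 * b * ρ ≤ μ ^ 2 * (n : ℝ) ^ 2 →
      4 * b * ρ ≤ μ ^ 2 * (l : ℝ) ^ 2 →
      μ / 2 * |(n : ℝ) ^ 2 - (l : ℝ) ^ 2| ≤ ‖nuP ρ u b μ n - nuP ρ u b μ l‖) ∧
    (∀ n : ℤ, n ≠ 0 → 4 * b * ρ ≤ μ ^ 2 * (n : ℝ) ^ 2 →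
      μ / 2 * (n : ℝ) ^ 2 ≤ ‖nuP ρ u b μ n‖ ∧
      ‖nuP ρ u b μ n‖ ≤ (μ + u) * (n : ℝ) ^ 2) := by
  -- key estimate for part (b)
  have key : ∀ n l : ℤ, n ≠ 0 → l ≠ 0 → (l : ℝ) ^ 2 ≤ (n : ℝ) ^ 2 →
      4 * b * ρ ≤ μ ^ 2 * (n : ℝ) ^ 2 → 4 * b * ρ ≤ μ ^ 2 * (l : ℝ) ^ 2 →
      μ / 2 * ((n : ℝ) ^ 2 - (l : ℝ) ^ 2) ≤ ‖nuP ρ u b μ n - nuP ρ u b μ l‖ := by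
    intro n l hn hl hle h1 h2
    have hre : (nuP ρ u b μ n - nuP ρ u b μ l).re
        = (-(μ * (n : ℝ) ^ 2) - |(n : ℝ)| * Real.sqrt (μ ^ 2 * (n : ℝ) ^ 2 - 4 * b * ρ)) / 2
          - (-(μ * (l : ℝ) ^ 2) - |(l : ℝ)| * Real.sqrt (μ ^ 2 * (l : ℝ) ^ 2 - 4 * b * ρ)) / 2 := by
      rw [Complex.sub_re, nuP_re _ _ _ _ _ h1, nuP_re _ _ _ _ _ h2]
    have habs : |(l : ℝ)| ≤ |(n : ℝ)| := by
      rw [← Real.sqrt_sq_eq_abs, ← Real.sqrt_sq_eq_abs]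
      exact Real.sqrt_le_sqrt hle
    have hs : Real.sqrt (μ ^ 2 * (l : ℝ) ^ 2 - 4 * b * ρ)
        ≤ Real.sqrt (μ ^ 2 * (n : ℝ) ^ 2 - 4 * b * ρ) := by
      apply Real.sqrt_le_sqrt; nlinarith [sq_nonneg μ]
    have hsl : 0 ≤ Real.sqrt (μ ^ 2 * (l : ℝ) ^ 2 - 4 * b * ρ) := Real.sqrt_nonneg _
    have hmul : |(l : ℝ)| * Real.sqrt (μ ^ 2 * (l : ℝ) ^ 2 - 4 * b * ρ)
        ≤ |(n : ℝ)| * Real.sqrt (μ ^ 2 * (n : ℝ) ^ 2 - 4 * b * ρ) :=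
      mul_le_mul habs hs hsl (abs_nonneg _)
    calc μ / 2 * ((n : ℝ) ^ 2 - (l : ℝ) ^ 2)
        ≤ -((nuP ρ u b μ n - nuP ρ u b μ l).re) := by rw [hre]; nlinarith
      _ ≤ |(nuP ρ u b μ n - nuP ρ u b μ l).re| := neg_le_abs _
      _ ≤ ‖nuP ρ u b μ n - nuP ρ u b μ l‖ := Complex.abs_re_le_norm _
  refine ⟨?_, ?_, ?_⟩
  · intro n hn h
    rw [nuP_re _ _ _ _ _ h, nuP_im _ _ _ _ _ h, abs_mul, abs_of_pos hu]
    have h1 := sq_abs_le n hn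
    have hs : 0 ≤ Real.sqrt (μ ^ 2 * (n : ℝ) ^ 2 - 4 * b * ρ) := Real.sqrt_nonneg _
    have h2 : 0 ≤ |(n : ℝ)| := abs_nonneg _
    nlinarith [mul_le_mul_of_nonneg_left h1 (mul_pos hμ hu).le,
      mul_nonneg hu.le (mul_nonneg h2 hs)]
  · intro n l hn hl hnl h1 h2
    rcases le_total ((l : ℝ) ^ 2) ((n : ℝ) ^ 2) with hle | hle
    · rw [_root_.abs_of_nonneg (by linarith : (0:ℝ) ≤ (n:ℝ)^2 - (l:ℝ)^2)]
      exact key n l hn hl hle h1 h2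
    · rw [abs_of_nonpos (by linarith : ((n:ℝ)^2 - (l:ℝ)^2) ≤ 0), neg_sub,
        norm_sub_rev]
      exact key l n hl hn hle h2 h1
  · intro n hn h
    have h1 := sq_abs_le n hn
    have hs : 0 ≤ Real.sqrt (μ ^ 2 * (n : ℝ) ^ 2 - 4 * b * ρ) := Real.sqrt_nonneg _
    have h2 : 0 ≤ |(n : ℝ)| := abs_nonneg _
    have hsle : Real.sqrt (μ ^ 2 * (n : ℝ) ^ 2 - 4 * b * ρ) ≤ μ * |(n : ℝ)| := by
      rw [show μ * |(n : ℝ)| = Real.sqrt ((μ * |(n : ℝ)|) ^ 2) from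
        (Real.sqrt_sq (by positivity)).symm]
      apply Real.sqrt_le_sqrt
      nlinarith [_root_.sq_abs (n : ℝ)]
    constructor
    · calc μ / 2 * (n : ℝ) ^ 2 ≤ -((nuP ρ u b μ n).re) := by
            rw [nuP_re _ _ _ _ _ h]; nlinarith
        _ ≤ |(nuP ρ u b μ n).re| := neg_le_abs _
        _ ≤ ‖nuP ρ u b μ n‖ := Complex.abs_re_le_norm _
    · calc ‖nuP ρ u b μ n‖ ≤ |(nuP ρ u b μ n).re| + |(nuP ρ u b μ n).im| :=
            Complex.norm_le_abs_re_add_abs_im _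
        _ ≤ (μ + u) * (n : ℝ) ^ 2 := by
            rw [nuP_re _ _ _ _ _ h, nuP_im _ _ _ _ _ h, abs_mul, abs_of_pos hu]
            rw [abs_of_nonpos (by nlinarith)]
            nlinarith [_root_.sq_abs (n : ℝ)]
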